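/- Define g(λ) = λ(λ²-1)^{-3/2}(√(λ²-1) - arcsec(λ)) for λ > 1. Then g'(λ) = ((1+2λ²)arcsec(λ) - √(λ²-1)(2+λ²))/(λ²-1)^{5/2} < 0 for all λ > 1. -/

import Mathlib

open Real Set

lemma hasDerivAt_arccos_inv (t : ℝ) (ht : 1 < t) :
    HasDerivAt (fun x : ℝ => Real.arccos (1/x)) (1/(t * Real.sqrt (t^2 - 1))) t := by
  have ht0 : (0:ℝ) < t := by linarith
  have hc : (0:ℝ) < t^2 - 1 := by nlinarith
  have hs0 : 0 < Real.sqrt (t^2 - 1) := Real.sqrt_pos.mpr hc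
  have hinv : HasDerivAt (fun x : ℝ => 1/x) (-(1/t^2)) t := by
    simpa [one_div] using hasDerivAt_inv ht0.ne'
  have h1 : (1:ℝ)/t ≠ -1 := by
    have : (0:ℝ) < 1/t := by positivity
    linarith
  have h2 : (1:ℝ)/t ≠ 1 := by
    have : (1:ℝ)/t < 1 := by rw [div_lt_one ht0]; linarith
    linarith
  have hcomp := (Real.hasDerivAt_arccos h1 h2).comp t hinv
  refine hcomp.congr_deriv (Eq.symm ?_)
  have hsq : Real.sqrt (1 - (1/t)^2) = Real.sqrt (t^2 - 1) / t := by
    rw [show 1 - (1/t)^2 = (t^2-1)/t^2 by field_simp, Real.sqrt_div hc.le,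
      Real.sqrt_sq ht0.le]
  rw [hsq]
  field_simp

noncomputable def psi (x : ℝ) : ℝ :=
  Real.sqrt (x^2 - 1) * (2 + x^2) / (1 + 2*x^2) - Real.arccos (1/x)

noncomputable def psi' (t : ℝ) : ℝ :=
  (((2*t) / (2 * Real.sqrt (t^2-1)) * (2 + t^2) + Real.sqrt (t^2-1) * (2*t)) * (1 + 2*t^2)
      - Real.sqrt (t^2-1) * (2 + t^2) * (4*t)) / (1 + 2*t^2)^2
    - 1/(t * Real.sqrt (t^2 - 1))

lemma hasDerivAt_psi (t : ℝ) (ht : 1 < t) : HasDerivAt psi (psi' t) t := by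
  have ht0 : (0:ℝ) < t := by linarith
  have hc : (0:ℝ) < t^2 - 1 := by nlinarith
  have hu : HasDerivAt (fun x : ℝ => x^2 - 1) (2*t) t := by
    simpa using (hasDerivAt_pow 2 t).sub_const 1
  have hsqrt := hu.sqrt hc.ne'
  have h2 : HasDerivAt (fun x : ℝ => 2 + x^2) (2*t) t := by
    simpa using ((hasDerivAt_pow 2 t).const_add 2)
  have hnum := hsqrt.mul h2
  have hden : HasDerivAt (fun x : ℝ => 1 + 2*x^2) (4*t) t := by
    have := ((hasDerivAt_pow 2 t).const_mul 2).const_add 1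
    refine this.congr_deriv (Eq.symm ?_)
    simp; ring
  have hdiv := hnum.div hden (by positivity)
  exact hdiv.sub (hasDerivAt_arccos_inv t ht)

lemma psi'_pos (t : ℝ) (ht : 1 < t) : 0 < psi' t := by
  have ht0 : (0:ℝ) < t := by linarith
  have hc : (0:ℝ) < t^2 - 1 := by nlinarith
  have hs0 : 0 < Real.sqrt (t^2 - 1) := Real.sqrt_pos.mpr hc
  have hs2 : Real.sqrt (t^2 - 1) ^ 2 = t^2 - 1 := Real.sq_sqrt hc.le
  set s := Real.sqrt (t^2 - 1) with hs
  rw [psi', sub_pos, div_lt_div_iff₀ (by positivity) (by positivity)]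
  have key : (1 + 2*t^2)^2 < t^2 * (2 + t^2) * (1 + 2*t^2)
      + 2*t^2*(t^2-1)*(1 + 2*t^2) - 4*t^2*(t^2-1)*(2+t^2) := by
    nlinarith [sq_nonneg (t^2-1), hc, sq_nonneg t, mul_pos hc hc, mul_pos (mul_pos hc hc) (by nlinarith : (0:ℝ) < 2*t^2-1)]
  have expand : (((2*t) / (2 * s) * (2 + t^2) + s * (2*t)) * (1 + 2*t^2)
      - s * (2 + t^2) * (4*t)) * (t * s)
      = t^2 * (2 + t^2) * (1 + 2*t^2) + 2*t^2*(t^2-1)*(1 + 2*t^2) - 4*t^2*(t^2-1)*(2+t^2) := by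
    field_simp
    linear_combination (-6) * hs2
  calc 1 * (1 + 2*t^2)^2 = (1 + 2*t^2)^2 := by ring
    _ < _ := by rw [expand] at *; linarith [key]

lemma psi_continuousOn : ContinuousOn psi (Ici 1) := by
  apply ContinuousOn.sub
  · apply ContinuousOn.div
    · exact ((Real.continuous_sqrt.comp (by continuity : Continuous fun x : ℝ => x^2 - 1)).mul
        (by continuity : Continuous fun x : ℝ => 2 + x^2)).continuousOn
    · exact (by continuity : Continuous fun x : ℝ => 1 + 2*x^2).continuousOn
    · intro x _; positivity
  · apply Real.continuous_arccos.comp_continuousOn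
    apply ContinuousOn.div continuousOn_const continuousOn_id
    intro x hx
    have h1 : (1:ℝ) ≤ x := hx
    intro h; simp only [id] at h; rw [h] at h1; linarith

lemma psi_strictMono : StrictMonoOn psi (Ici 1) := by
  apply strictMonoOn_of_deriv_pos (convex_Ici 1) psi_continuousOn
  intro x hx
  rw [interior_Ici] at hx
  rw [(hasDerivAt_psi x hx).deriv]
  exact psi'_pos x hx

lemma key_ineq (lam : ℝ) (hlam : 1 < lam) :
    (1 + 2 * lam ^ 2) * Real.arccos (1 / lam) <
      Real.sqrt (lam ^ 2 - 1) * (2 + lam ^ 2) := by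
  have h0 : psi 1 = 0 := by
    simp [psi, Real.arccos_one]
  have h := psi_strictMono (self_mem_Ici) (le_of_lt (show (1:ℝ) < lam from hlam)) hlam
  rw [h0] at h
  have hD : (0:ℝ) < 1 + 2*lam^2 := by positivity
  rw [psi, sub_pos, lt_div_iff₀ hD] at h
  linarith [h]

lemma rpow_half_nat (c : ℝ) (hc : 0 < c) (n : ℕ) : c ^ ((n:ℝ)/2) = Real.sqrt c ^ n := by
  rw [Real.sqrt_eq_rpow, show ((n:ℝ)/2) = (1/2) * (n:ℝ) by ring, Real.rpow_mul hc.le,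
    Real.rpow_natCast]

theorem stmt_13 (lam : ℝ) (hlam : 1 < lam) :
    HasDerivAt
      (fun t : ℝ => t * (t ^ 2 - 1) ^ (-(3:ℝ)/2) *
        (Real.sqrt (t ^ 2 - 1) - Real.arccos (1 / t)))
      (((1 + 2 * lam ^ 2) * Real.arccos (1 / lam) -
        Real.sqrt (lam ^ 2 - 1) * (2 + lam ^ 2)) / (lam ^ 2 - 1) ^ ((5:ℝ)/2)) lam ∧
    ((1 + 2 * lam ^ 2) * Real.arccos (1 / lam) -
        Real.sqrt (lam ^ 2 - 1) * (2 + lam ^ 2)) / (lam ^ 2 - 1) ^ ((5:ℝ)/2) < 0 := by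
  have hlam0 : (0:ℝ) < lam := by linarith
  have hc : (0:ℝ) < lam^2 - 1 := by nlinarith
  have hs0 : 0 < Real.sqrt (lam^2 - 1) := Real.sqrt_pos.mpr hc
  have hs2 : Real.sqrt (lam^2 - 1) ^ 2 = lam^2 - 1 := Real.sq_sqrt hc.le
  set s := Real.sqrt (lam^2 - 1) with hsdef
  have e1 : (lam^2-1) ^ (-(3:ℝ)/2) = 1/s^3 := by
    rw [show (-(3:ℝ)/2) = -(((3:ℕ):ℝ)/2) by norm_num, Real.rpow_neg hc.le,
      rpow_half_nat _ hc, one_div]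
  have e2 : (lam^2-1) ^ (-(3:ℝ)/2 - 1) = 1/s^5 := by
    rw [show (-(3:ℝ)/2 - 1) = -(((5:ℕ):ℝ)/2) by norm_num, Real.rpow_neg hc.le,
      rpow_half_nat _ hc, one_div]
  have e3 : (lam^2-1) ^ ((5:ℝ)/2) = s^5 := by
    rw [show ((5:ℝ)/2) = (((5:ℕ):ℝ)/2) by norm_num, rpow_half_nat _ hc]
  constructor
  · have hu : HasDerivAt (fun x : ℝ => x^2 - 1) (2*lam) lam := by
      simpa using (hasDerivAt_pow 2 lam).sub_const 1
    have hrpow := hu.rpow_const (p := -(3:ℝ)/2) (Or.inl hc.ne')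
    have hsqrt := hu.sqrt hc.ne'
    have hfull := ((hasDerivAt_id lam).mul hrpow).mul
      (hsqrt.sub (hasDerivAt_arccos_inv lam hlam))
    refine hfull.congr_deriv (Eq.symm ?_)
    simp only [Pi.mul_apply, Pi.sub_apply]
    rw [e1, e2, e3]
    simp only [← hsdef, id]
    set A := Real.arccos (1/lam)
    field_simp
    ring_nf
    linear_combination (A - s) * hs2
  · apply div_neg_of_neg_of_pos
    · linarith [key_ineq lam hlam]
    · rw [e3]; positivity
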